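/- The three-point phase function S(p₀,p₁,p₂) = −Σ_{cyclic} sinh(2(a₀−a₁))z₂ for points pᵢ=(aᵢ,zᵢ) ∈ ℝ² is invariant under the simultaneous left action of the ax+b group on all three arguments: S(g·p₀, g·p₁, g·p₂) = S(p₀,p₁,p₂) for all g and all triples of points. -/
import Mathlib


noncomputable section

/-- The `ax+b`-type group law on `ℝ²`: `(a,z)·(a',z') = (a+a', e^{−2a'}z + z')`. -/
def mul2 (p q : ℝ × ℝ) : ℝ × ℝ := (p.1 + q.1, Real.exp (-2 * q.1) * p.2 + q.2)

/-- The inverse for `mul2`. -/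
def inv2 (p : ℝ × ℝ) : ℝ × ℝ := (-p.1, -(Real.exp (2 * p.1) * p.2))

/-- The two-dimensional geodesic symmetry `s_{(a,z)}(a',z') = (2a−a', 2cosh(2(a−a'))z − z')`. -/
def sym2 (p q : ℝ × ℝ) : ℝ × ℝ :=
  (2 * p.1 - q.1, 2 * Real.cosh (2 * (p.1 - q.1)) * p.2 - q.2)

/-- The three-point phase `S(p₀,p₁,p₂) = Σ_cyclic sinh(2(a₀−a₁))z₂`. -/
def phase3 (p0 p1 p2 : ℝ × ℝ) : ℝ :=
  Real.sinh (2 * (p0.1 - p1.1)) * p2.2 + Real.sinh (2 * (p1.1 - p2.1)) * p0.2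
    + Real.sinh (2 * (p2.1 - p0.1)) * p1.2

/-- the phase is invariant under the simultaneous left action of the
`ax+b` group on its three arguments. -/
theorem phase3_invariant (g p0 p1 p2 : ℝ × ℝ) :
    phase3 (mul2 g p0) (mul2 g p1) (mul2 g p2) = phase3 p0 p1 p2 := by
  simp only [phase3, mul2, add_sub_add_left_eq_sub, Real.sinh_eq]
  have h0 := Real.exp_pos (-2 * p0.1)
  have h1 := Real.exp_pos (-2 * p1.1)
  have h2 := Real.exp_pos (-2 * p2.1)
  have e0 : Real.exp (2 * (p0.1 - p1.1)) = Real.exp (-2*p1.1) / Real.exp (-2*p0.1) := by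
    rw [← Real.exp_sub]; ring_nf
  have e1 : Real.exp (2 * (p1.1 - p2.1)) = Real.exp (-2*p2.1) / Real.exp (-2*p1.1) := by
    rw [← Real.exp_sub]; ring_nf
  have e2 : Real.exp (2 * (p2.1 - p0.1)) = Real.exp (-2*p0.1) / Real.exp (-2*p2.1) := by
    rw [← Real.exp_sub]; ring_nf
  rw [Real.exp_neg (2 * (p0.1 - p1.1)), Real.exp_neg (2 * (p1.1 - p2.1)),
    Real.exp_neg (2 * (p2.1 - p0.1)), e0, e1, e2]
  field_simp
  ring
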